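/- Let f ∈ BV([a,b]) and let G:[a,b]→ℝ be continuous, increasing, and p-H-Hölder with constant H>0 and exponent p ∈ (0,1]. Then the trapezoidal quadrature rule satisfies |((f(a)+f(b))/2)(G(b)−G(a)) − ∫_a^b f dG| ≤ H ((b−a)/2)^p Var_a^b f. -/

import Mathlib

open Set

/-- Right jump of a function: `u(t⁺) - u(t)`. -/
noncomputable def rjump (u : ℝ → ℝ) (t : ℝ) : ℝ := Function.rightLim u t - u t

/-- Cumulative jump part of `u` on `[a, t)`: `u^B(t) = Σ_{s ∈ [a,t)} Δ⁺u(s)`. -/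
noncomputable def jumpPart (u : ℝ → ℝ) (a t : ℝ) : ℝ :=
  ∑' s : ℝ, Set.indicator (Set.Ico a t) (fun v => rjump u v) s

/-- Continuous part of `u` (relative to the base point `a`): `u^C = u - u^B`. -/
noncomputable def contPart (u : ℝ → ℝ) (a t : ℝ) : ℝ := u t - jumpPart u a t

/-- `I` is the Kurzweil–Stieltjes integral `∫_a^b f dg`: for every `ε > 0` there is a
gauge `δ` such that every `δ`-fine tagged partition of `[a,b]` has Riemann–Stieltjes
sum within `ε` of `I`. -/
def IsKSIntegral (f g : ℝ → ℝ) (a b I : ℝ) : Prop :=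
  ∀ ε > (0:ℝ), ∃ δ : ℝ → ℝ, (∀ x, 0 < δ x) ∧
    ∀ (n : ℕ) (t ξ : ℕ → ℝ),
      t 0 = a → t n = b →
      (∀ i < n, t i < t (i + 1)) →
      (∀ i < n, t i ≤ ξ i ∧ ξ i ≤ t (i + 1)) →
      (∀ i < n, ξ i - δ (ξ i) < t i ∧ t (i + 1) < ξ i + δ (ξ i)) →
      |(∑ i ∈ Finset.range n, f (ξ i) * (g (t (i + 1)) - g (t i))) - I| < ε

/-- `f` is `g`-Lipschitz continuous on `[a,b]` with constant `H`. -/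
def GLipschitzOn (f g : ℝ → ℝ) (H a b : ℝ) : Prop :=
  ∀ t ∈ Set.Icc a b, ∀ s ∈ Set.Icc a b, |f t - f s| ≤ H * |g t - g s|

/-- `g` is left-continuous at every point of `s`. -/
def LeftContOn (g : ℝ → ℝ) (s : Set ℝ) : Prop :=
  ∀ t ∈ s, Filter.Tendsto g (nhdsWithin t (Set.Iio t)) (nhds (g t))

/-- Existence data of a `δ`-fine tagged partition of `[a, x]`. -/
def HasFinePartition (a : ℝ) (δ : ℝ → ℝ) (x : ℝ) : Prop :=
  ∃ (n : ℕ) (t ξ : ℕ → ℝ), t 0 = a ∧ t n = x ∧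
    (∀ i < n, t i < t (i + 1)) ∧
    (∀ i < n, t i ≤ ξ i ∧ ξ i ≤ t (i + 1)) ∧
    (∀ i < n, ξ i - δ (ξ i) < t i ∧ t (i + 1) < ξ i + δ (ξ i))

lemma hasFinePartition_append (a : ℝ) (δ : ℝ → ℝ)
    {x y c : ℝ} (hxy : x < y) (hxc : x ≤ c) (hcy : c ≤ y)
    (h1 : c - δ c < x) (h2 : y < c + δ c)
    (hx : HasFinePartition a δ x) : HasFinePartition a δ y := by
  obtain ⟨n, t, ξ, ht0, htn, hlt, htag, hfin⟩ := hx
  refine ⟨n + 1, Function.update t (n + 1) y, Function.update ξ n c, ?_, ?_, ?_, ?_, ?_⟩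
  · rw [Function.update_of_ne (by omega)]; exact ht0
  · rw [Function.update_self]
  · intro i hi
    rcases Nat.lt_or_ge i n with h | h
    · rw [Function.update_of_ne (by omega : i ≠ n + 1),
        Function.update_of_ne (by omega : i + 1 ≠ n + 1)]
      exact hlt i h
    · have hin : i = n := by omega
      subst hin
      rw [Function.update_of_ne (by omega : i ≠ i + 1), Function.update_self, htn]
      exact hxy
  · intro i hi
    rcases Nat.lt_or_ge i n with h | h
    · rw [Function.update_of_ne (by omega : i ≠ n + 1),
        Function.update_of_ne (by omega : i + 1 ≠ n + 1),
        Function.update_of_ne (by omega : i ≠ n)]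
      exact htag i h
    · have hin : i = n := by omega
      subst hin
      rw [Function.update_of_ne (by omega : i ≠ i + 1), Function.update_self,
        Function.update_self, htn]
      exact ⟨hxc, hcy⟩
  · intro i hi
    rcases Nat.lt_or_ge i n with h | h
    · rw [Function.update_of_ne (by omega : i ≠ n + 1),
        Function.update_of_ne (by omega : i + 1 ≠ n + 1),
        Function.update_of_ne (by omega : i ≠ n)]
      exact hfin i h
    · have hin : i = n := by omega
      subst hin
      rw [Function.update_of_ne (by omega : i ≠ i + 1), Function.update_self,
        Function.update_self, htn]
      exact ⟨h1, h2⟩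

/-- Cousin's lemma: every gauge on `[a,b]` admits a fine tagged partition. -/
lemma cousin_exists (a b : ℝ) (hab : a ≤ b) (δ : ℝ → ℝ) (hδ : ∀ x, 0 < δ x) :
    HasFinePartition a δ b := by
  set A : Set ℝ := {x | x ≤ b ∧ HasFinePartition a δ x} with hA
  have hbase : HasFinePartition a δ a :=
    ⟨0, fun _ => a, fun _ => a, rfl, rfl,
      fun i hi => absurd hi (Nat.not_lt_zero i),
      fun i hi => absurd hi (Nat.not_lt_zero i),
      fun i hi => absurd hi (Nat.not_lt_zero i)⟩
  have haA : a ∈ A := ⟨hab, hbase⟩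
  have hne : A.Nonempty := ⟨a, haA⟩
  have hbdd : BddAbove A := ⟨b, fun x hx => hx.1⟩
  set c := sSup A with hc
  have hca : a ≤ c := le_csSup hbdd haA
  have hcb : c ≤ b := csSup_le hne (fun x hx => hx.1)
  have hPc : HasFinePartition a δ c := by
    obtain ⟨x, hxA, hx⟩ := exists_lt_of_lt_csSup hne
      (show c - δ c < c by linarith [hδ c])
    have hxc : x ≤ c := le_csSup hbdd hxA
    rcases eq_or_lt_of_le hxc with he | hlt
    · exact he ▸ hxA.2
    · exact hasFinePartition_append a δ hlt hxc le_rfl hx (by linarith [hδ c]) hxA.2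
  have hcbe : c = b := by
    by_contra hnee
    have hcb' : c < b := lt_of_le_of_ne hcb hnee
    set y := min b (c + δ c / 2) with hy
    have hcy : c < y := lt_min hcb' (by linarith [hδ c])
    have hyA : y ∈ A :=
      ⟨min_le_left _ _, hasFinePartition_append a δ hcy le_rfl hcy.le
        (by linarith [hδ c]) (lt_of_le_of_lt (min_le_right _ _) (by linarith [hδ c])) hPc⟩
    have := le_csSup hbdd hyA
    linarith
  exact hcbe ▸ hPc

lemma sum_range_two_mul (v : ℕ → ℝ) (n : ℕ) :
    ∑ j ∈ Finset.range (2 * n), v j = ∑ i ∈ Finset.range n, (v (2 * i) + v (2 * i + 1)) := by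
  induction n with
  | zero => simp
  | succ k ih =>
    rw [Finset.sum_range_succ, ← ih, show 2 * (k + 1) = (2 * k + 1) + 1 by ring,
      Finset.sum_range_succ, Finset.sum_range_succ]
    ring

/-- Trapezoidal quadrature rule for a Riemann–Stieltjes integral with a
continuous, increasing, `p`-`H`-Hölder integrator `G` and `f` of bounded variation:
`|((f(a)+f(b))/2)(G(b) - G(a)) - ∫_a^b f dG| ≤ H ((b-a)/2)^p Var_a^b f`. -/
theorem trapezoidal_quadrature_error
    (a b H p : ℝ) (hab : a ≤ b) (hH : 0 < H) (hp0 : 0 < p) (hp1 : p ≤ 1)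
    (f G : ℝ → ℝ)
    (hf : BoundedVariationOn f (Set.Icc a b))
    (hGc : ContinuousOn G (Set.Icc a b))
    (hGm : MonotoneOn G (Set.Icc a b))
    (hGh : ∀ x ∈ Set.Icc a b, ∀ y ∈ Set.Icc a b, |G x - G y| ≤ H * |x - y| ^ p)
    (I : ℝ) (hI : IsKSIntegral f G a b I) :
    |(f a + f b) / 2 * (G b - G a) - I| ≤
      H * ((b - a) / 2) ^ p * (eVariationOn f (Set.Icc a b)).toReal := by
  rcases eq_or_lt_of_le hab with heq | hab'
  · -- degenerate case a = b
    subst heq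
    have h1 : ∀ ε > (0:ℝ), |I| < ε := by
      intro ε hε
      obtain ⟨δ, hδ, hfine⟩ := hI ε hε
      have := hfine 0 (fun _ => a) (fun _ => a) rfl rfl
        (fun i hi => absurd hi (Nat.not_lt_zero i))
        (fun i hi => absurd hi (Nat.not_lt_zero i))
        (fun i hi => absurd hi (Nat.not_lt_zero i))
      simpa using this
    have h2 : |I| ≤ 0 := by
      by_contra h2
      push_neg at h2
      exact lt_irrefl _ (h1 _ h2)
    have hRHS : 0 ≤ H * ((a - a) / 2) ^ p * (eVariationOn f (Set.Icc a a)).toReal :=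
      mul_nonneg (mul_nonneg hH.le (Real.rpow_nonneg (by norm_num) p)) ENNReal.toReal_nonneg
    calc |(f a + f a) / 2 * (G a - G a) - I| = |I| := by simp
      _ ≤ H * ((a - a) / 2) ^ p * (eVariationOn f (Set.Icc a a)).toReal := h2.trans hRHS
  · -- main case a < b
    set M := H * ((b - a) / 2) ^ p with hM_def
    set g : ℝ → ℝ := fun x => G x - (G a + G b) / 2 with hg_def
    have haI : a ∈ Set.Icc a b := ⟨le_rfl, hab⟩
    have hbI : b ∈ Set.Icc a b := ⟨hab, le_rfl⟩
    have hM0 : 0 ≤ M :=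
      mul_nonneg hH.le (Real.rpow_nonneg (by linarith) p)
    have hgM : ∀ x ∈ Set.Icc a b, |g x| ≤ M := by
      intro x hx
      have h1 : G a ≤ G x := hGm haI hx hx.1
      have h2 : G x ≤ G b := hGm hx hbI hx.2
      have h3 : |g x| ≤ (G b - G a) / 2 := by
        rw [abs_le]; constructor <;> simp only [hg_def] <;> linarith
      have h4 : G b - G a ≤ H * (b - a) ^ p := by
        have := hGh b hbI a haI
        rw [abs_of_nonneg (by linarith : (0:ℝ) ≤ G b - G a),
          abs_of_nonneg (by linarith : (0:ℝ) ≤ b - a)] at this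
        exact this
      have h5 : ((b - a) / 2 : ℝ) ^ p = (b - a) ^ p / 2 ^ p :=
        Real.div_rpow (by linarith) (by norm_num) p
      have h6 : (2:ℝ) ^ p ≤ 2 := by
        have := Real.rpow_le_rpow_of_exponent_le (by norm_num : (1:ℝ) ≤ 2) hp1
        rwa [Real.rpow_one] at this
      have h7 : (0:ℝ) < 2 ^ p := Real.rpow_pos_of_pos (by norm_num) p
      have h8 : H * (b - a) ^ p / 2 ≤ H * (b - a) ^ p / 2 ^ p := by
        apply div_le_div_of_nonneg_left _ h7 h6
        exact mul_nonneg hH.le (Real.rpow_nonneg (by linarith) p)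
      calc |g x| ≤ (G b - G a) / 2 := h3
        _ ≤ H * (b - a) ^ p / 2 := by linarith
        _ ≤ H * (b - a) ^ p / 2 ^ p := h8
        _ = M := by rw [hM_def, h5]; ring
    -- the ε-argument
    have main : ∀ ε > (0:ℝ),
        |(f a + f b) / 2 * (G b - G a) - I| ≤
          M * (eVariationOn f (Set.Icc a b)).toReal + ε := by
      intro ε hε
      obtain ⟨δ, hδ, hfine⟩ := hI ε hε
      obtain ⟨n, t, ξ, ht0, htn, hlt, htag, hfin⟩ := cousin_exists a b hab δ hδ
      have hS : |(∑ i ∈ Finset.range n, f (ξ i) * (G (t (i + 1)) - G (t i))) - I| < ε :=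
        hfine n t ξ ht0 htn hlt htag hfin
      set S := ∑ i ∈ Finset.range n, f (ξ i) * (G (t (i + 1)) - G (t i)) with hSdef
      -- monotonicity of the partition points
      have hmono : ∀ i j, i ≤ j → j ≤ n → t i ≤ t j := by
        intro i j hij hjn
        induction j with
        | zero => have : i = 0 := Nat.le_zero.mp hij; simp [this]
        | succ k ih =>
          rcases Nat.lt_or_ge i (k + 1) with h | h
          · exact le_trans (ih (Nat.lt_succ_iff.mp h) (le_trans (Nat.le_succ k) hjn))
              (le_of_lt (hlt k (Nat.lt_of_succ_le hjn)))
          · have : i = k + 1 := le_antisymm hij h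
            simp [this]
      have htmem : ∀ i ≤ n, t i ∈ Set.Icc a b := by
        intro i hi
        exact ⟨ht0 ▸ hmono 0 i (Nat.zero_le i) hi, htn ▸ hmono i n hi le_rfl⟩
      have hξmem : ∀ i < n, ξ i ∈ Set.Icc a b := by
        intro i hi
        constructor
        · exact le_trans (htmem i hi.le).1 (htag i hi).1
        · exact le_trans (htag i hi).2 (htmem (i + 1) hi).2
      -- Abel summation identity
      have key : (f a + f b) / 2 * (G b - G a) - S =
          ∑ i ∈ Finset.range n,
            ((f (t (i + 1)) - f (ξ i)) * g (t (i + 1)) - (f (t i) - f (ξ i)) * g (t i)) := by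
        have e : ∀ i ∈ Finset.range n,
            (f (t (i + 1)) - f (ξ i)) * g (t (i + 1)) - (f (t i) - f (ξ i)) * g (t i) =
            (f (t (i + 1)) * g (t (i + 1)) - f (t i) * g (t i)) -
              f (ξ i) * (G (t (i + 1)) - G (t i)) := by
          intro i _; simp only [hg_def]; ring
        rw [Finset.sum_congr rfl e, Finset.sum_sub_distrib,
          Finset.sum_range_sub (fun i => f (t i) * g (t i)), ht0, htn, hSdef]
        simp only [hg_def]; ring
      -- per-term bound
      have hterm : ∀ i ∈ Finset.range n,
          |(f (t (i + 1)) - f (ξ i)) * g (t (i + 1)) - (f (t i) - f (ξ i)) * g (t i)| ≤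
            (|f (t (i + 1)) - f (ξ i)| + |f (t i) - f (ξ i)|) * M := by
        intro i hi
        rw [Finset.mem_range] at hi
        have g1 : |g (t (i + 1))| ≤ M := hgM _ (htmem (i + 1) hi)
        have g2 : |g (t i)| ≤ M := hgM _ (htmem i hi.le)
        calc |(f (t (i + 1)) - f (ξ i)) * g (t (i + 1)) - (f (t i) - f (ξ i)) * g (t i)|
            ≤ |(f (t (i + 1)) - f (ξ i)) * g (t (i + 1))| + |(f (t i) - f (ξ i)) * g (t i)| :=
              abs_sub _ _
          _ = |f (t (i + 1)) - f (ξ i)| * |g (t (i + 1))| + |f (t i) - f (ξ i)| * |g (t i)| := by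
              rw [abs_mul, abs_mul]
          _ ≤ (|f (t (i + 1)) - f (ξ i)| + |f (t i) - f (ξ i)|) * M := by
              have a1 := abs_nonneg (f (t (i + 1)) - f (ξ i))
              have a2 := abs_nonneg (f (t i) - f (ξ i))
              nlinarith
      -- the doubled sequence
      set u : ℕ → ℝ := fun j =>
        if j < 2 * n then (if j % 2 = 0 then t (j / 2) else ξ (j / 2)) else b with hu_def
      have hu0 : ∀ i < n, u (2 * i) = t i := by
        intro i hi
        simp only [hu_def]
        rw [if_pos (by omega), if_pos (by omega)]
        congr 1; omega
      have hu1 : ∀ i < n, u (2 * i + 1) = ξ i := by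
        intro i hi
        simp only [hu_def]
        rw [if_pos (by omega), if_neg (by omega)]
        congr 1; omega
      have hu2 : ∀ i < n, u (2 * i + 2) = t (i + 1) := by
        intro i hi
        simp only [hu_def]
        rcases Nat.lt_or_ge (2 * i + 2) (2 * n) with h | h
        · rw [if_pos h, if_pos (by omega)]
          congr 1; omega
        · have hin : i + 1 = n := by omega
          rw [if_neg (by omega), hin, htn]
      have humono : Monotone u := by
        apply monotone_nat_of_le_succ
        intro j
        rcases Nat.lt_or_ge j (2 * n) with hj | hj
        · by_cases hje : j % 2 = 0
          · obtain ⟨i, rfl⟩ : ∃ i, j = 2 * i := ⟨j / 2, by omega⟩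
            have hin : i < n := by omega
            rw [hu0 i hin, hu1 i hin]
            exact (htag i hin).1
          · obtain ⟨i, rfl⟩ : ∃ i, j = 2 * i + 1 := ⟨j / 2, by omega⟩
            have hin : i < n := by omega
            rw [hu1 i hin, show 2 * i + 1 + 1 = 2 * i + 2 by omega, hu2 i hin]
            exact (htag i hin).2
        · have h1 : u j = b := by simp only [hu_def]; rw [if_neg (by omega)]
          have h2 : u (j + 1) = b := by simp only [hu_def]; rw [if_neg (by omega)]
          rw [h1, h2]
      have humem : ∀ j, u j ∈ Set.Icc a b := by
        intro j
        simp only [hu_def]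
        rcases Nat.lt_or_ge j (2 * n) with hj | hj
        · rw [if_pos hj]
          by_cases hje : j % 2 = 0
          · rw [if_pos hje]; exact htmem _ (by omega)
          · rw [if_neg hje]; exact hξmem _ (by omega)
        · rw [if_neg (by omega)]; exact hbI
      -- variation bound
      have hvar : ∑ j ∈ Finset.range (2 * n), |f (u (j + 1)) - f (u j)| ≤
          (eVariationOn f (Set.Icc a b)).toReal := by
        have hle := eVariationOn.sum_le (f := f) (n := 2 * n) humono humem
        have heq : ∑ j ∈ Finset.range (2 * n), |f (u (j + 1)) - f (u j)| =
            (∑ j ∈ Finset.range (2 * n), edist (f (u (j + 1))) (f (u j))).toReal := by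
          rw [ENNReal.toReal_sum (fun j _ => edist_ne_top _ _)]
          apply Finset.sum_congr rfl
          intro j _
          rw [edist_dist, ENNReal.toReal_ofReal dist_nonneg, Real.dist_eq]
        rw [heq]
        exact ENNReal.toReal_mono hf hle
      -- pairing
      have hpair : ∑ i ∈ Finset.range n, (|f (t (i + 1)) - f (ξ i)| + |f (t i) - f (ξ i)|) =
          ∑ j ∈ Finset.range (2 * n), |f (u (j + 1)) - f (u j)| := by
        rw [sum_range_two_mul (fun j => |f (u (j + 1)) - f (u j)|)]
        apply Finset.sum_congr rfl
        intro i hi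
        rw [Finset.mem_range] at hi
        symm
        show |f (u (2 * i + 1)) - f (u (2 * i))| + |f (u (2 * i + 1 + 1)) - f (u (2 * i + 1))| = _
        rw [hu0 i hi, hu1 i hi, show 2 * i + 1 + 1 = 2 * i + 2 by omega, hu2 i hi,
          abs_sub_comm (f (ξ i)) (f (t i))]
        ring
      -- assemble
      have hTS : |(f a + f b) / 2 * (G b - G a) - S| ≤
          M * (eVariationOn f (Set.Icc a b)).toReal := by
        rw [key]
        calc |∑ i ∈ Finset.range n,
              ((f (t (i + 1)) - f (ξ i)) * g (t (i + 1)) - (f (t i) - f (ξ i)) * g (t i))|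
            ≤ ∑ i ∈ Finset.range n,
              |(f (t (i + 1)) - f (ξ i)) * g (t (i + 1)) - (f (t i) - f (ξ i)) * g (t i)| :=
              Finset.abs_sum_le_sum_abs _ _
          _ ≤ ∑ i ∈ Finset.range n,
              (|f (t (i + 1)) - f (ξ i)| + |f (t i) - f (ξ i)|) * M :=
              Finset.sum_le_sum hterm
          _ = (∑ i ∈ Finset.range n,
              (|f (t (i + 1)) - f (ξ i)| + |f (t i) - f (ξ i)|)) * M := by
              rw [Finset.sum_mul]
          _ ≤ (eVariationOn f (Set.Icc a b)).toReal * M := by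
              apply mul_le_mul_of_nonneg_right _ hM0
              rw [hpair]; exact hvar
          _ = M * (eVariationOn f (Set.Icc a b)).toReal := mul_comm _ _
      calc |(f a + f b) / 2 * (G b - G a) - I|
          ≤ |(f a + f b) / 2 * (G b - G a) - S| + |S - I| := abs_sub_le _ _ _
        _ ≤ M * (eVariationOn f (Set.Icc a b)).toReal + ε := by
            have := hS
            linarith [hTS, hS]
    -- conclude
    by_contra hcon
    push_neg at hcon
    have hd : 0 < (|(f a + f b) / 2 * (G b - G a) - I| -
        M * (eVariationOn f (Set.Icc a b)).toReal) / 2 := by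
      simp only [hM_def] at hcon ⊢
      linarith
    have := main _ hd
    simp only [hM_def] at hcon this
    linarith
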